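/- Let O be the ℂ-subalgebra of ℂ[[t]] that is the image of the substitution homomorphism ℂ[[x,y]] → ℂ[[t]] determined by x ↦ t⁴ and y ↦ t⁶ + t⁷. Then {ord(f) : f ∈ O, f ≠ 0} = ℕ ∖ {1, 2, 3, 5, 7, 9, 11, 15}; in particular 13 is the order of an element of O while 15 is not. -/

import Mathlib

set_option maxHeartbeats 1000000

/-- The order of a formal power series: the smallest `i` such that the coefficient
of `t^i` is nonzero (junk value `0` for the zero series). -/
noncomputable def ord (f : PowerSeries ℂ) : ℕ :=
  sInf {i : ℕ | PowerSeries.coeff i f ≠ 0}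

/-- The substitution homomorphism `ℂ[[x,y]] → ℂ[[t]]`, `x ↦ t⁴`, `y ↦ t⁶ + t⁷`,
described coefficientwise: the coefficient of `t^n` in the image of `P` is the (finite)
sum over monomials `x^a y^b` of `P` of the corresponding coefficient of `P` times the
coefficient of `t^n` in `(t⁴)^a (t⁶+t⁷)^b`. -/
noncomputable def subst47 (P : MvPowerSeries (Fin 2) ℂ) : PowerSeries ℂ :=
  PowerSeries.mk fun n => ∑ᶠ d : Fin 2 →₀ ℕ,
    MvPowerSeries.coeff d P *
      PowerSeries.coeff n
        (((PowerSeries.X : PowerSeries ℂ) ^ 4) ^ (d 0) *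
          ((PowerSeries.X : PowerSeries ℂ) ^ 6 + (PowerSeries.X : PowerSeries ℂ) ^ 7) ^ (d 1))

/-- `O = ℂ[[t⁴, t⁶+t⁷]]`, the image of the substitution homomorphism. -/
noncomputable def Oimage : Set (PowerSeries ℂ) := Set.range subst47

open PowerSeries

noncomputable def fd (a b : ℕ) : Fin 2 →₀ ℕ := Finsupp.single 0 a + Finsupp.single 1 b

lemma fd_apply0 (a b : ℕ) : fd a b 0 = a := by simp [fd, Finsupp.single_apply]
lemma fd_apply1 (a b : ℕ) : fd a b 1 = b := by simp [fd, Finsupp.single_apply]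
lemma fd_eval (d : Fin 2 →₀ ℕ) : fd (d 0) (d 1) = d := by
  ext i; fin_cases i <;> simp [fd, Finsupp.single_apply]

lemma coeff_one_add_X_pow' (b k : ℕ) :
    PowerSeries.coeff k ((1 + X : PowerSeries ℂ)^b) = (b.choose k : ℂ) := by
  have h : ((1 + X : PowerSeries ℂ)) = ((1 + Polynomial.X : Polynomial ℂ) : PowerSeries ℂ) := by
    simp
  rw [h, ← Polynomial.coe_pow, Polynomial.coeff_coe, Polynomial.coeff_one_add_X_pow]

lemma coeff_base (a b n : ℕ) :
    PowerSeries.coeff n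
        (((X : PowerSeries ℂ)^4)^a * ((X : PowerSeries ℂ)^6 + (X : PowerSeries ℂ)^7)^b) =
      if 4*a+6*b ≤ n then (b.choose (n - (4*a+6*b)) : ℂ) else 0 := by
  have h2 : ((X : PowerSeries ℂ)^4)^a * ((X : PowerSeries ℂ)^6 + (X : PowerSeries ℂ)^7)^b
      = X^(4*a+6*b) * ((1 + X)^b) := by
    have h1 : ((X : PowerSeries ℂ)^6 + (X : PowerSeries ℂ)^7) = X^6 * (1 + X) := by ring
    rw [h1, mul_pow, ← pow_mul, ← pow_mul, pow_add]; ring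
  rw [h2, PowerSeries.coeff_X_pow_mul', coeff_one_add_X_pow']

lemma coeff_subst47 (P : MvPowerSeries (Fin 2) ℂ) (n : ℕ) :
    PowerSeries.coeff n (subst47 P) =
      ∑ p ∈ (Finset.range (n/4+1) ×ˢ Finset.range (n/6+1)).filter
          (fun p => 4*p.1+6*p.2 ≤ n),
        MvPowerSeries.coeff (fd p.1 p.2) P * ((p.2.choose (n - (4*p.1+6*p.2)) : ℕ) : ℂ) := by
  classical
  set s := (Finset.range (n/4+1) ×ˢ Finset.range (n/6+1)).filter
      (fun p => 4*p.1+6*p.2 ≤ n) with hs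
  rw [subst47, PowerSeries.coeff_mk]
  have hinj : ∀ p ∈ s, ∀ q ∈ s, fd p.1 p.2 = fd q.1 q.2 → p = q := by
    intro p _ q _ h
    have h0 := congrArg (fun g => g 0) h
    have h1 := congrArg (fun g => g 1) h
    simp only [fd_apply0, fd_apply1] at h0 h1
    exact Prod.ext h0 h1
  have hsupp : (Function.support fun d : Fin 2 →₀ ℕ =>
      MvPowerSeries.coeff d P *
        PowerSeries.coeff n
          (((X : PowerSeries ℂ) ^ 4) ^ (d 0) *
            ((X : PowerSeries ℂ) ^ 6 + (X : PowerSeries ℂ) ^ 7) ^ (d 1)))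
      ⊆ (s.image fun p => fd p.1 p.2 : Finset (Fin 2 →₀ ℕ)) := by
    intro d hd
    simp only [Function.mem_support] at hd
    have hle : 4 * (d 0) + 6 * (d 1) ≤ n := by
      by_contra hc
      rw [coeff_base, if_neg hc, mul_zero] at hd
      exact hd rfl
    simp only [Finset.coe_image, Set.mem_image, Finset.mem_coe]
    refine ⟨(d 0, d 1), ?_, fd_eval d⟩
    simp only [hs, Finset.mem_filter, Finset.mem_product, Finset.mem_range]
    omega
  rw [finsum_eq_sum_of_support_subset _ hsupp, Finset.sum_image hinj]
  refine Finset.sum_congr rfl fun p hp => ?_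
  simp only [hs, Finset.mem_filter] at hp
  rw [fd_apply0, fd_apply1, coeff_base, if_pos hp.2]

-- specialized coefficient formulas
lemma cs_zero (P : MvPowerSeries (Fin 2) ℂ) (n : ℕ) (hn : n = 1 ∨ n = 2 ∨ n = 3 ∨ n = 5 ∨ n = 9) :
    PowerSeries.coeff n (subst47 P) = 0 := by
  rcases hn with rfl | rfl | rfl | rfl | rfl <;>
  · rw [coeff_subst47]
    norm_num [Finset.sum_filter, Finset.sum_product, Finset.sum_range_succ, Nat.choose]

lemma cs6 (P : MvPowerSeries (Fin 2) ℂ) :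
    PowerSeries.coeff 6 (subst47 P) = MvPowerSeries.coeff (fd 0 1) P := by
  rw [coeff_subst47]
  norm_num [Finset.sum_filter, Finset.sum_product, Finset.sum_range_succ, Nat.choose]

lemma cs7 (P : MvPowerSeries (Fin 2) ℂ) :
    PowerSeries.coeff 7 (subst47 P) = MvPowerSeries.coeff (fd 0 1) P := by
  rw [coeff_subst47]
  norm_num [Finset.sum_filter, Finset.sum_product, Finset.sum_range_succ, Nat.choose]

lemma cs10 (P : MvPowerSeries (Fin 2) ℂ) :
    PowerSeries.coeff 10 (subst47 P) = MvPowerSeries.coeff (fd 1 1) P := by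
  rw [coeff_subst47]
  norm_num [Finset.sum_filter, Finset.sum_product, Finset.sum_range_succ, Nat.choose]

lemma cs11 (P : MvPowerSeries (Fin 2) ℂ) :
    PowerSeries.coeff 11 (subst47 P) = MvPowerSeries.coeff (fd 1 1) P := by
  rw [coeff_subst47]
  norm_num [Finset.sum_filter, Finset.sum_product, Finset.sum_range_succ, Nat.choose]

lemma cs13 (P : MvPowerSeries (Fin 2) ℂ) :
    PowerSeries.coeff 13 (subst47 P) = 2 * MvPowerSeries.coeff (fd 0 2) P := by
  rw [coeff_subst47]
  norm_num [Finset.sum_filter, Finset.sum_product, Finset.sum_range_succ, Nat.choose]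
  ring

lemma cs14 (P : MvPowerSeries (Fin 2) ℂ) :
    PowerSeries.coeff 14 (subst47 P) =
      MvPowerSeries.coeff (fd 2 1) P + MvPowerSeries.coeff (fd 0 2) P := by
  rw [coeff_subst47]
  norm_num [Finset.sum_filter, Finset.sum_product, Finset.sum_range_succ, Nat.choose]
  ring

lemma cs15 (P : MvPowerSeries (Fin 2) ℂ) :
    PowerSeries.coeff 15 (subst47 P) = MvPowerSeries.coeff (fd 2 1) P := by
  rw [coeff_subst47]
  norm_num [Finset.sum_filter, Finset.sum_product, Finset.sum_range_succ, Nat.choose]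

-- order basics
lemma ord_coeff_ne {f : PowerSeries ℂ} (hf : f ≠ 0) :
    PowerSeries.coeff (ord f) f ≠ 0 := by
  unfold ord
  have hne : {i : ℕ | PowerSeries.coeff i f ≠ 0}.Nonempty := by
    by_contra h
    rw [Set.not_nonempty_iff_eq_empty] at h
    apply hf
    ext n
    have : n ∉ {i : ℕ | PowerSeries.coeff i f ≠ 0} := by rw [h]; exact Set.notMem_empty n
    simpa using this
  exact Nat.sInf_mem hne

lemma coeff_of_lt_ord {f : PowerSeries ℂ} {n : ℕ} (h : n < ord f) :
    PowerSeries.coeff n f = 0 := by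
  unfold ord at h
  by_contra hc
  have h2 : sInf {i : ℕ | PowerSeries.coeff i f ≠ 0} ≤ n := Nat.sInf_le hc
  omega

lemma ord_eq_of {f : PowerSeries ℂ} {N : ℕ} (h1 : PowerSeries.coeff N f ≠ 0)
    (h2 : ∀ n < N, PowerSeries.coeff n f = 0) : ord f = N := by
  unfold ord
  refine le_antisymm (Nat.sInf_le h1) ?_
  by_contra h
  push_neg at h
  have hmem : sInf {i : ℕ | PowerSeries.coeff i f ≠ 0} ∈
      {i : ℕ | PowerSeries.coeff i f ≠ 0} := Nat.sInf_mem ⟨N, h1⟩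
  exact hmem (h2 _ h)

-- constructions
lemma coeff_subst47_monomial (a b n : ℕ) :
    PowerSeries.coeff n (subst47 (MvPowerSeries.monomial (fd a b) 1)) =
      if 4*a+6*b ≤ n then (b.choose (n-(4*a+6*b)) : ℂ) else 0 := by
  rw [subst47, PowerSeries.coeff_mk]
  rw [finsum_eq_single _ (fd a b)
    (fun d hd => by rw [MvPowerSeries.coeff_monomial_ne hd, zero_mul])]
  rw [MvPowerSeries.coeff_monomial_same, one_mul, fd_apply0, fd_apply1, coeff_base]

noncomputable def Pc (a b : ℕ) : MvPowerSeries (Fin 2) ℂ :=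
  MvPowerSeries.monomial (fd a (b+2)) 1 + MvPowerSeries.monomial (fd (a+3) b) (-1)

lemma fd_ne (a b : ℕ) : fd a (b+2) ≠ fd (a+3) b := by
  intro h
  have := congrArg (fun g => g 1) h
  simp only [fd_apply1] at this
  omega

lemma coeff_subst47_Pc (a b n : ℕ) :
    PowerSeries.coeff n (subst47 (Pc a b)) =
      if 4*a+6*b+12 ≤ n then
        (((b+2).choose (n-(4*a+6*b+12)) : ℂ) - ((b.choose (n-(4*a+6*b+12)) : ℕ) : ℂ))
      else 0 := by
  classical
  rw [subst47, PowerSeries.coeff_mk]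
  set w : (Fin 2 →₀ ℕ) → ℂ := fun d =>
    PowerSeries.coeff n
      (((X : PowerSeries ℂ) ^ 4) ^ (d 0) *
        ((X : PowerSeries ℂ) ^ 6 + (X : PowerSeries ℂ) ^ 7) ^ (d 1)) with hw
  have hcoeff : ∀ d, MvPowerSeries.coeff d (Pc a b) =
      (if d = fd a (b+2) then (1:ℂ) else 0) + (if d = fd (a+3) b then (-1:ℂ) else 0) := by
    intro d
    rw [Pc, map_add, MvPowerSeries.coeff_monomial, MvPowerSeries.coeff_monomial]
  have hsupp : (Function.support fun d : Fin 2 →₀ ℕ => MvPowerSeries.coeff d (Pc a b) * w d)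
      ⊆ ({fd a (b+2), fd (a+3) b} : Finset (Fin 2 →₀ ℕ)) := by
    intro d hd
    simp only [Function.mem_support] at hd
    by_contra hmem
    simp only [Finset.coe_insert, Finset.coe_singleton, Set.mem_insert_iff,
      Set.mem_singleton_iff, not_or] at hmem
    rw [hcoeff, if_neg hmem.1, if_neg hmem.2, add_zero, zero_mul] at hd
    exact hd rfl
  rw [finsum_eq_sum_of_support_subset _ hsupp,
    Finset.sum_pair (fd_ne a b)]
  rw [hcoeff, hcoeff, if_pos rfl, if_neg (fd_ne a b), if_neg (Ne.symm (fd_ne a b)), if_pos rfl]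
  have hw1 : w (fd a (b+2)) = if 4*a+6*b+12 ≤ n then (((b+2).choose (n-(4*a+6*b+12)) : ℕ) : ℂ) else 0 := by
    rw [hw]
    simp only
    rw [fd_apply0, fd_apply1, coeff_base]
    have : 4*a+6*(b+2) = 4*a+6*b+12 := by ring
    rw [this]
  have hw2 : w (fd (a+3) b) = if 4*a+6*b+12 ≤ n then ((b.choose (n-(4*a+6*b+12)) : ℕ) : ℂ) else 0 := by
    rw [hw]
    simp only
    rw [fd_apply0, fd_apply1, coeff_base]
    have : 4*(a+3)+6*b = 4*a+6*b+12 := by ring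
    rw [this]
  rw [hw1, hw2]
  split_ifs <;> ring

lemma achieve_even (a b : ℕ) : ∃ f ∈ Oimage, f ≠ 0 ∧ ord f = 4*a+6*b := by
  refine ⟨subst47 (MvPowerSeries.monomial (fd a b) 1), ⟨_, rfl⟩, ?_, ?_⟩
  · intro h
    have := coeff_subst47_monomial a b (4*a+6*b)
    rw [h, if_pos le_rfl, Nat.sub_self, Nat.choose_zero_right] at this
    simp at this
  · refine ord_eq_of ?_ ?_
    · rw [coeff_subst47_monomial, if_pos le_rfl, Nat.sub_self, Nat.choose_zero_right]
      norm_num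
    · intro n hn
      rw [coeff_subst47_monomial, if_neg (by omega)]

lemma achieve_odd (a b : ℕ) : ∃ f ∈ Oimage, f ≠ 0 ∧ ord f = 4*a+6*b+13 := by
  have hc : PowerSeries.coeff (4*a+6*b+13) (subst47 (Pc a b)) = 2 := by
    rw [coeff_subst47_Pc, if_pos (by omega)]
    have : 4*a+6*b+13 - (4*a+6*b+12) = 1 := by omega
    rw [this, Nat.choose_one_right, Nat.choose_one_right]
    push_cast
    ring
  refine ⟨subst47 (Pc a b), ⟨_, rfl⟩, ?_, ?_⟩
  · intro h
    rw [h] at hc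
    simp at hc
  · refine ord_eq_of (by rw [hc]; norm_num) ?_
    intro n hn
    rw [coeff_subst47_Pc]
    by_cases hm : 4*a+6*b+12 ≤ n
    · rw [if_pos hm]
      have : n - (4*a+6*b+12) = 0 := by omega
      rw [this, Nat.choose_zero_right, Nat.choose_zero_right]
      norm_num
    · rw [if_neg hm]

/-- The set of orders of nonzero elements of `O = ℂ[[t⁴, t⁶+t⁷]]` is
`ℕ ∖ {1,2,3,5,7,9,11,15}`; in particular `13` is the order of an element of `O`
while `15` is not. -/
theorem orders_of_image_subst47 :
    {n : ℕ | ∃ f ∈ Oimage, f ≠ 0 ∧ n = ord f} =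
        ({1, 2, 3, 5, 7, 9, 11, 15} : Set ℕ)ᶜ ∧
      (∃ f ∈ Oimage, f ≠ 0 ∧ ord f = 13) ∧
      ¬ (∃ f ∈ Oimage, f ≠ 0 ∧ ord f = 15) := by
  have hmain : {n : ℕ | ∃ f ∈ Oimage, f ≠ 0 ∧ n = ord f} =
      ({1, 2, 3, 5, 7, 9, 11, 15} : Set ℕ)ᶜ := by
    ext n
    simp only [Set.mem_setOf_eq, Set.mem_compl_iff, Set.mem_insert_iff,
      Set.mem_singleton_iff, not_or]
    constructor
    · rintro ⟨f, hf, hf0, rfl⟩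
      obtain ⟨P, rfl⟩ := hf
      have hne := ord_coeff_ne hf0
      refine ⟨?_, ?_, ?_, ?_, ?_, ?_, ?_, ?_⟩ <;> intro h
      · exact hne (by rw [h]; exact cs_zero P 1 (by norm_num))
      · exact hne (by rw [h]; exact cs_zero P 2 (by norm_num))
      · exact hne (by rw [h]; exact cs_zero P 3 (by norm_num))
      · exact hne (by rw [h]; exact cs_zero P 5 (by norm_num))
      · -- ord = 7
        have h6 : PowerSeries.coeff 6 (subst47 P) = 0 := coeff_of_lt_ord (by omega)
        rw [cs6] at h6
        rw [h, cs7, h6] at hne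
        exact hne rfl
      · exact hne (by rw [h]; exact cs_zero P 9 (by norm_num))
      · -- ord = 11
        have h10 : PowerSeries.coeff 10 (subst47 P) = 0 := coeff_of_lt_ord (by omega)
        rw [cs10] at h10
        rw [h, cs11, h10] at hne
        exact hne rfl
      · -- ord = 15
        have h13 : PowerSeries.coeff 13 (subst47 P) = 0 := coeff_of_lt_ord (by omega)
        have h14 : PowerSeries.coeff 14 (subst47 P) = 0 := coeff_of_lt_ord (by omega)
        rw [cs13] at h13
        rw [cs14] at h14
        have h02 : MvPowerSeries.coeff (fd 0 2) P = 0 := by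
          rcases mul_eq_zero.1 h13 with h' | h'
          · norm_num at h'
          · exact h'
        have h21 : MvPowerSeries.coeff (fd 2 1) P = 0 := by
          rw [h02, add_zero] at h14; exact h14
        rw [h, cs15, h21] at hne
        exact hne rfl
    · rintro ⟨h1, h2, h3, h5, h7, h9, h11, h15⟩
      have hdec : ∃ a b c, c ≤ 1 ∧ n = 4*a+6*b+13*c := by
        have hm : n % 4 = 0 ∨ n % 4 = 1 ∨ n % 4 = 2 ∨ n % 4 = 3 := by omega
        rcases hm with hm | hm | hm | hm
        · exact ⟨n/4, 0, 0, by omega, by omega⟩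
        · exact ⟨(n-13)/4, 0, 1, by omega, by omega⟩
        · exact ⟨(n-6)/4, 1, 0, by omega, by omega⟩
        · exact ⟨(n-19)/4, 1, 1, by omega, by omega⟩
      obtain ⟨a, b, c, hc, rfl⟩ := hdec
      interval_cases c
      · obtain ⟨f, hf, hf0, hord⟩ := achieve_even a b
        exact ⟨f, hf, hf0, by omega⟩
      · obtain ⟨f, hf, hf0, hord⟩ := achieve_odd a b
        exact ⟨f, hf, hf0, by omega⟩
  refine ⟨hmain, ?_, ?_⟩
  · have : (13:ℕ) ∈ ({1, 2, 3, 5, 7, 9, 11, 15} : Set ℕ)ᶜ := by norm_num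
    rw [← hmain] at this
    obtain ⟨f, hf, hf0, he⟩ := this
    exact ⟨f, hf, hf0, he.symm⟩
  · rintro ⟨f, hf, hf0, he⟩
    have : (15:ℕ) ∈ {n : ℕ | ∃ f ∈ Oimage, f ≠ 0 ∧ n = ord f} := ⟨f, hf, hf0, he.symm⟩
    rw [hmain] at this
    norm_num at this
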